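/- Let H ∈ (0,1), T > 0, and let φ : (0,T] → ℝ be differentiable on (0,T] such that the function f(u) = u^{1/2−H}φ(u) is Lipschitz on (0,T]. Then the limit c = lim_{u↓0} u^{1/2−H}φ(u) exists, and there is a constant C > 0 such that the function φ̂(u) = φ(u) − c u^{H−1/2} satisfies |φ̂(u)| ≤ C u^{H+1/2} and |φ̂′(u)| ≤ C u^{H−1/2} for all u ∈ (0,T]. -/

import Mathlib

open MeasureTheory Set Filter Topology

/-- decomposition claim from the proof of Lemma B: Lipschitz continuity of
`u ↦ u^{1/2-H} φ(u)` yields `φ(u) = c u^{H-1/2} + φ̂(u)` with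
`|φ̂(u)| ≤ C u^{H+1/2}` and `|φ̂′(u)| ≤ C u^{H-1/2}`. -/
theorem stmt_19 (H T : ℝ) (hH : H ∈ Set.Ioo (0:ℝ) 1) (hT : 0 < T)
    (φ φ' : ℝ → ℝ)
    (hderiv : ∀ u ∈ Set.Ioc (0:ℝ) T, HasDerivAt φ (φ' u) u)
    (L : ℝ)
    (hf : ∀ u ∈ Set.Ioc (0:ℝ) T, ∀ v ∈ Set.Ioc (0:ℝ) T,
      |u ^ (1/2 - H) * φ u - v ^ (1/2 - H) * φ v| ≤ L * |u - v|) :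
    ∃ c : ℝ,
      Filter.Tendsto (fun u : ℝ => u ^ (1/2 - H) * φ u)
        (nhdsWithin 0 (Set.Ioi 0)) (nhds c) ∧
      ∃ C > 0, ∀ u ∈ Set.Ioc (0:ℝ) T,
        |φ u - c * u ^ (H - 1/2)| ≤ C * u ^ (H + 1/2) ∧
        |φ' u - c * (H - 1/2) * u ^ (H - 3/2)| ≤ C * u ^ (H - 1/2) := by
  obtain ⟨hH0, hH1⟩ := hH
  set g : ℝ → ℝ := fun u => u ^ (1/2 - H) * φ u with hg
  set L' : ℝ := max L 0 with hL'
  have hL'0 : 0 ≤ L' := le_max_right _ _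
  have hfg : ∀ u ∈ Set.Ioc (0:ℝ) T, ∀ v ∈ Set.Ioc (0:ℝ) T,
      |g u - g v| ≤ L' * |u - v| := fun u hu v hv =>
    (hf u hu v hv).trans (mul_le_mul_of_nonneg_right (le_max_left _ _) (abs_nonneg _))
  set a : ℕ → ℝ := fun n => g (T / (n + 1)) with ha
  have hmem : ∀ n : ℕ, T / ((n : ℝ) + 1) ∈ Set.Ioc (0:ℝ) T := by
    intro n
    constructor
    · positivity
    · rw [div_le_iff₀ (by positivity)]
      nlinarith [Nat.cast_nonneg (α := ℝ) n]
  have htend0 : Tendsto (fun n : ℕ => T / ((n : ℝ) + 1)) atTop (𝓝 0) :=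
    Tendsto.div_atTop tendsto_const_nhds
      (tendsto_atTop_add_const_right _ 1 tendsto_natCast_atTop_atTop)
  have hcauchy : CauchySeq a := by
    apply cauchySeq_of_le_tendsto_0 (fun N : ℕ => L' * (2 * (T / ((N : ℝ) + 1))))
    · intro n m N hn hm
      rw [Real.dist_eq]
      refine (hfg _ (hmem n) _ (hmem m)).trans (mul_le_mul_of_nonneg_left ?_ hL'0)
      have h1 : T / ((n : ℝ) + 1) ≤ T / ((N : ℝ) + 1) := by
        apply div_le_div_of_nonneg_left hT.le (by positivity)
        exact_mod_cast by exact_mod_cast add_le_add_left (Nat.cast_le.2 hn) 1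
      have h2 : T / ((m : ℝ) + 1) ≤ T / ((N : ℝ) + 1) := by
        apply div_le_div_of_nonneg_left hT.le (by positivity)
        exact_mod_cast by exact_mod_cast add_le_add_left (Nat.cast_le.2 hm) 1
      have h3 := (hmem n).1
      have h4 := (hmem m).1
      rw [abs_le]
      constructor <;> nlinarith
    · have : Tendsto (fun N : ℕ => L' * (2 * (T / ((N : ℝ) + 1)))) atTop
          (𝓝 (L' * (2 * 0))) := (htend0.const_mul 2).const_mul L'
      simpa using this
  obtain ⟨c, hc⟩ := cauchySeq_tendsto_of_complete hcauchy
  have hkey : ∀ u ∈ Set.Ioc (0:ℝ) T, |g u - c| ≤ L' * u := by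
    intro u hu
    have h1 : Tendsto (fun n : ℕ => |g u - a n|) atTop (𝓝 |g u - c|) :=
      (tendsto_const_nhds.sub hc).abs
    have h2 : Tendsto (fun n : ℕ => L' * |u - T / ((n : ℝ) + 1)|) atTop
        (𝓝 (L' * |u - 0|)) := ((tendsto_const_nhds.sub htend0).abs).const_mul L'
    have := le_of_tendsto_of_tendsto' h1 h2 fun n => hfg u hu _ (hmem n)
    simpa [abs_of_pos hu.1] using this
  refine ⟨c, ?_, L' * (1 + |H - 1/2|) + 1, by positivity, ?_⟩
  · -- the limit
    have hev : Set.Ioc (0:ℝ) T ∈ 𝓝[>] (0:ℝ) := Ioc_mem_nhdsGT hT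
    have hdist : Tendsto (fun u : ℝ => |g u - c|) (𝓝[>] (0:ℝ)) (𝓝 0) := by
      apply squeeze_zero' (Filter.eventually_of_mem hev fun u _ => abs_nonneg _)
        (Filter.eventually_of_mem hev fun u hu => hkey u hu)
      have : Tendsto (fun u : ℝ => L' * u) (𝓝 (0:ℝ)) (𝓝 (L' * 0)) :=
        tendsto_id.const_mul L'
      simpa using this.mono_left nhdsWithin_le_nhds
    have hdist' : Tendsto (fun u : ℝ => dist (g u) c) (𝓝[>] (0:ℝ)) (𝓝 0) := by
      simpa [Real.dist_eq] using hdist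
    exact tendsto_iff_dist_tendsto_zero.2 hdist'
  · intro u hu
    have hu0 : (0:ℝ) < u := hu.1
    have hune : u ≠ 0 := ne_of_gt hu0
    -- rpow identities
    have e1 : u ^ (1/2 - H) * u ^ (H - 1/2) = 1 := by
      rw [← Real.rpow_add hu0]; norm_num
    have e2 : u ^ (1/2 - H - 1) * u ^ (H - 1/2) = u ^ (-1 : ℝ) := by
      rw [← Real.rpow_add hu0]; ring_nf
    have e3 : u ^ (1/2 - H) * u ^ (H - 3/2) = u ^ (-1 : ℝ) := by
      rw [← Real.rpow_add hu0]; ring_nf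
    have e4 : u * u ^ (H - 3/2) = u ^ (H - 1/2) := by
      nth_rewrite 1 [← Real.rpow_one u]
      rw [← Real.rpow_add hu0]; ring_nf
    have e5 : u * u ^ (H - 1/2) = u ^ (H + 1/2) := by
      nth_rewrite 1 [← Real.rpow_one u]
      rw [← Real.rpow_add hu0]; ring_nf
    have hr : (0:ℝ) ≤ u ^ (H - 1/2) := Real.rpow_nonneg hu0.le _
    have hs : (0:ℝ) ≤ u ^ (H - 3/2) := Real.rpow_nonneg hu0.le _
    have hgb := hkey u hu
    constructor
    · -- first bound
      have heq : φ u - c * u ^ (H - 1/2) = (g u - c) * u ^ (H - 1/2) := by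
        simp only [hg]
        linear_combination (-φ u) * e1
      rw [heq, abs_mul, abs_of_nonneg hr]
      calc |g u - c| * u ^ (H - 1/2) ≤ (L' * u) * u ^ (H - 1/2) :=
            mul_le_mul_of_nonneg_right hgb hr
        _ = L' * u ^ (H + 1/2) := by rw [mul_assoc, e5]
        _ ≤ (L' * (1 + |H - 1/2|) + 1) * u ^ (H + 1/2) := by
            apply mul_le_mul_of_nonneg_right _ (Real.rpow_nonneg hu0.le _)
            nlinarith [abs_nonneg (H - 1/2)]
    · -- derivative bound
      set D : ℝ := (1/2 - H) * u ^ (1/2 - H - 1) * φ u + u ^ (1/2 - H) * φ' u with hD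
      have hgd : HasDerivAt g D u := by
        have h1 : HasDerivAt (fun v : ℝ => v ^ (1/2 - H)) ((1/2 - H) * u ^ (1/2 - H - 1)) u :=
          Real.hasDerivAt_rpow_const (Or.inl hune)
        exact h1.mul (hderiv u hu)
      have hDb : |D| ≤ L' := by
        have hslope := hasDerivAt_iff_tendsto_slope.1 hgd
        have hle : 𝓝[Set.Ioo (0:ℝ) u] u ≤ 𝓝[≠] u :=
          nhdsWithin_mono _ fun v hv => ne_of_lt hv.2
        have hne : (𝓝[Set.Ioo (0:ℝ) u] u).NeBot := right_nhdsWithin_Ioo_neBot hu0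
        have habs : Tendsto (fun v => |slope g u v|) (𝓝[Set.Ioo (0:ℝ) u] u) (𝓝 |D|) :=
          (hslope.mono_left hle).abs
        refine le_of_tendsto habs ?_
        filter_upwards [self_mem_nhdsWithin] with v hv
        have hvm : v ∈ Set.Ioc (0:ℝ) T := ⟨hv.1, hv.2.le.trans hu.2⟩
        have hvu : |v - u| > 0 := abs_pos.2 (sub_ne_zero.2 (ne_of_lt hv.2))
        rw [slope_def_field, abs_div, div_le_iff₀ hvu]
        exact hfg v hvm u hu
      have heq : φ' u - c * (H - 1/2) * u ^ (H - 3/2)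
          = D * u ^ (H - 1/2) + (g u - c) * ((H - 1/2) * u ^ (H - 3/2)) := by
        simp only [hD, hg]
        linear_combination (-(1/2 - H) * φ u) * e2 + (-φ' u) * e1 + (-(H - 1/2) * φ u) * e3
      rw [heq]
      calc |D * u ^ (H - 1/2) + (g u - c) * ((H - 1/2) * u ^ (H - 3/2))|
          ≤ |D| * u ^ (H - 1/2) + |g u - c| * (|H - 1/2| * u ^ (H - 3/2)) := by
            refine (abs_add_le _ _).trans ?_
            rw [abs_mul, abs_mul, abs_mul, abs_of_nonneg hr, abs_of_nonneg hs]
        _ ≤ L' * u ^ (H - 1/2) + (L' * u) * (|H - 1/2| * u ^ (H - 3/2)) := by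
            gcongr <;> positivity
        _ = L' * (1 + |H - 1/2|) * u ^ (H - 1/2) := by
            rw [show (L' * u) * (|H - 1/2| * u ^ (H - 3/2))
                = L' * |H - 1/2| * (u * u ^ (H - 3/2)) by ring, e4]; ring
        _ ≤ (L' * (1 + |H - 1/2|) + 1) * u ^ (H - 1/2) := by
            apply mul_le_mul_of_nonneg_right _ hr; linarith
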